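/- Every Hitomezashi a-excursion has odd length. More precisely, an a-excursion from (a−1, i) to (a−1, j) has i ≢ j (mod 2) and odd length. -/

import Mathlib

/-- The Hitomezashi pattern determined by sequences `ε η : ℤ → ZMod 2`:
horizontal edges `{(i,j),(i+1,j)}` when `i ≡ η j (mod 2)` and
vertical edges `{(i,j),(i,j+1)}` when `j ≡ ε i (mod 2)`. -/
def Hitomezashi (ε η : ℤ → ZMod 2) : SimpleGraph (ℤ × ℤ) :=
  SimpleGraph.fromRel (fun v w =>
    (w = (v.1 + 1, v.2) ∧ (v.1 : ZMod 2) = η v.2) ∨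
    (w = (v.1, v.2 + 1) ∧ (v.2 : ZMod 2) = ε v.1))

/-- A Hitomezashi `a`-excursion: a path with at least three vertices whose first and
last vertices lie on the line `x = a - 1` and whose other vertices lie in `{x ≥ a}`. -/
def IsExcursion (ε η : ℤ → ZMod 2) (a : ℤ) {u v : ℤ × ℤ}
    (p : (Hitomezashi ε η).Walk u v) : Prop :=
  p.IsPath ∧ 3 ≤ p.support.length ∧ u.1 = a - 1 ∧ v.1 = a - 1 ∧
    ∀ w ∈ p.support.tail.dropLast, a ≤ w.1

namespace HitoAux

open SimpleGraph Walk

lemma htwo : (2 : ZMod 2) = 0 := by decide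

lemma zmod_ne_add_one : ∀ u : ZMod 2, u ≠ u + 1 := by decide

lemma zmod_chain : ∀ u v t : ZMod 2, u ≠ v → v ≠ t → u = t := by decide

lemma zmod_add11 : ∀ u : ZMod 2, u + 1 + 1 = u := by decide

lemma zmod_sub1 : ∀ u : ZMod 2, u - 1 = u + 1 := by decide

lemma adj_cases {ε η : ℤ → ZMod 2} {u w : ℤ × ℤ} (h : (Hitomezashi ε η).Adj u w) :
    (w = (u.1 + 1, u.2) ∧ (u.1 : ZMod 2) = η u.2) ∨
    (w = (u.1 - 1, u.2) ∧ (u.1 : ZMod 2) = η u.2 + 1) ∨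
    (w = (u.1, u.2 + 1) ∧ (u.2 : ZMod 2) = ε u.1) ∨
    (w = (u.1, u.2 - 1) ∧ (u.2 : ZMod 2) = ε u.1 + 1) := by
  rw [Hitomezashi, SimpleGraph.fromRel_adj] at h
  obtain ⟨-, h | h⟩ := h
  · rcases h with ⟨h1, h2⟩ | ⟨h1, h2⟩
    · exact Or.inl ⟨h1, h2⟩
    · exact Or.inr (Or.inr (Or.inl ⟨h1, h2⟩))
  · rcases h with ⟨h1, h2⟩ | ⟨h1, h2⟩
    · subst h1
      refine Or.inr (Or.inl ⟨by simp, ?_⟩)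
      simp only
      push_cast
      rw [h2]
    · subst h1
      refine Or.inr (Or.inr (Or.inr ⟨by simp, ?_⟩))
      simp only
      push_cast
      rw [h2]

lemma walk_split {V : Type*} {G : SimpleGraph V} (pr : V → Prop) [DecidablePred pr] :
    ∀ {u v : V} (q : G.Walk u v), ¬ pr u → pr v →
    ∃ (w w' : V) (q₁ : G.Walk u w) (h : G.Adj w w') (q₂ : G.Walk w' v),
      q = q₁.append (SimpleGraph.Walk.cons h q₂) ∧ (∀ x ∈ q₁.support, ¬ pr x) ∧ pr w' := by
  intro u v q
  induction q with
  | nil => intro h1 h2; exact absurd h2 h1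
  | @cons u t v h rest ih =>
    intro h1 h2
    by_cases ht : pr t
    · exact ⟨u, t, Walk.nil, h, rest, by simp, by simpa using h1, ht⟩
    · obtain ⟨w, w', q₁, hadj, q₂, heq, hall, hw'⟩ := ih ht h2
      refine ⟨w, w', Walk.cons h q₁, hadj, q₂, by rw [heq]; rfl, ?_, hw'⟩
      intro x hx
      rw [Walk.support_cons, List.mem_cons] at hx
      rcases hx with rfl | hx
      · exact h1
      · exact hall x hx

variable (ε η : ℤ → ZMod 2)

/-- The unique vertical neighbour height of `z` in column `a`. -/
def nb (a z : ℤ) : ℤ := if (z : ZMod 2) = ε a then z + 1 else z - 1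

def StP (n : ℕ) : Prop := ∀ (a y j : ℤ) (q : (Hitomezashi ε η).Walk (a, y) (a, j)),
  q.length = n → q.IsPath → (∀ w ∈ q.support, a ≤ w.1) →
  η y = (a : ZMod 2) + 1 → η j = (a : ZMod 2) + 1 → 1 ≤ n →
  Odd n ∧ (y : ZMod 2) ≠ (j : ZMod 2)

def StA (n : ℕ) : Prop := ∀ (a z j : ℤ) (q : (Hitomezashi ε η).Walk (a, z) (a, j)),
  q.length = n → q.IsPath → (∀ w ∈ q.support, a ≤ w.1) →
  η j = (a : ZMod 2) + 1 → 1 ≤ n → ((a, nb ε a z) ∉ q.support.tail) →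
  Even n ∧ (z : ZMod 2) = (j : ZMod 2)

def StB (n : ℕ) : Prop := ∀ (a z j : ℤ) (q : (Hitomezashi ε η).Walk (a, z) (a, j)),
  q.length = n → q.IsPath → (∀ w ∈ q.support, a ≤ w.1) →
  η j = (a : ZMod 2) + 1 → η z = (a : ZMod 2) → ((a + 1, z) ∉ q.support.tail) →
  Odd n ∧ (z : ZMod 2) ≠ (j : ZMod 2)

def StE (n : ℕ) : Prop := ∀ (a y j : ℤ) (q : (Hitomezashi ε η).Walk (a + 1, y) (a, j)),
  q.length = n → q.IsPath → (∀ w ∈ q.support, a ≤ w.1) →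
  η y = (a : ZMod 2) → η j = (a : ZMod 2) + 1 → ((a, y) ∉ q.support) →
  Odd n ∧ (y : ZMod 2) = (j : ZMod 2)

/-- Common continuation for `StP` after a forced vertical first step. -/
lemma vert_step (ih : ∀ m < n, StP ε η m ∧ StA ε η m ∧ StB ε η m ∧ StE ε η m)
    (a y j y' : ℤ) {w : ℤ × ℤ} (h : (Hitomezashi ε η).Adj (a, y) w)
    (q' : (Hitomezashi ε η).Walk w (a, j))
    (hlen' : q'.length + 1 = n) (hpath : (Walk.cons h q').IsPath)
    (hstart : (a, y) ∉ q'.support)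
    (hsupp' : ∀ v ∈ q'.support, a <= v.1)
    (hej : η j = (a : ZMod 2) + 1) (hn : 1 <= n)
    (hw : w = (a, y')) (hy'cast : ((y' : ℤ) : ZMod 2) = (y : ZMod 2) + 1)
    (hnb : nb ε a y' = y) :
    Odd n ∧ (y : ZMod 2) ≠ (j : ZMod 2) := by
  subst hw
  by_cases h0 : q'.length = 0
  · have hje : ((a, y') : ℤ × ℤ) = (a, j) := Walk.eq_of_length_eq_zero h0
    have hj : y' = j := by simpa using congrArg Prod.snd hje
    constructor
    · have : n = 1 := by omega
      simp [this]
    · rw [← hj, hy'cast]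
      exact zmod_ne_add_one _
  · obtain ⟨-, hA, -, -⟩ := ih (n - 1) (by omega)
    obtain ⟨hev, hjz⟩ := hA a y' j q' (by omega) hpath.of_cons hsupp' hej (by omega)
      (by rw [hnb]; exact fun hmem => hstart (List.mem_of_mem_tail hmem))
    constructor
    · rw [Nat.odd_iff]; rw [Nat.even_iff] at hev; omega
    · rw [← hjz, hy'cast]
      exact zmod_ne_add_one _

/-- Common continuation for `StB` after a forced vertical step. -/
lemma vert_stepB (ih : ∀ m < n, StP ε η m ∧ StA ε η m ∧ StB ε η m ∧ StE ε η m)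
    (a z j z' : ℤ) {w : ℤ × ℤ} (h : (Hitomezashi ε η).Adj (a, z) w)
    (q' : (Hitomezashi ε η).Walk w (a, j))
    (hlen' : q'.length + 1 = n) (hpath : (Walk.cons h q').IsPath)
    (hstart : (a, z) ∉ q'.support)
    (hsupp' : ∀ v ∈ q'.support, a ≤ v.1)
    (hej : η j = (a : ZMod 2) + 1)
    (hw : w = (a, z')) (hz'cast : ((z' : ℤ) : ZMod 2) = (z : ZMod 2) + 1)
    (hnb : nb ε a z' = z) :
    Odd n ∧ (z : ZMod 2) ≠ (j : ZMod 2) := by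
  subst hw
  by_cases h0 : q'.length = 0
  · have hje : ((a, z') : ℤ × ℤ) = (a, j) := Walk.eq_of_length_eq_zero h0
    have hj : z' = j := by simpa using congrArg Prod.snd hje
    constructor
    · have : n = 1 := by omega
      simp [this]
    · rw [← hj, hz'cast]
      exact zmod_ne_add_one _
  · obtain ⟨-, hA, -, -⟩ := ih (n - 1) (by omega)
    obtain ⟨hev, hjz⟩ := hA a z' j q' (by omega) hpath.of_cons hsupp' hej (by omega)
      (by rw [hnb]; exact fun hmem => hstart (List.mem_of_mem_tail hmem))
    constructor
    · rw [Nat.odd_iff]; rw [Nat.even_iff] at hev; omega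
    · rw [← hjz, hz'cast]
      exact zmod_ne_add_one _

lemma main : ∀ n : ℕ, StP ε η n ∧ StA ε η n ∧ StB ε η n ∧ StE ε η n := by
  intro n
  induction n using Nat.strong_induction_on with
  | _ n ih =>
  refine ⟨?_, ?_, ?_, ?_⟩
  · -- StP
    intro a y j q hlen hpath hsupp hey hej hn
    cases q with
    | nil => simp only [Walk.length_nil] at hlen; omega
    | @cons _ w _ h q' =>
      have hwsupp : a <= w.1 := hsupp w (by simp)
      have hlen' : q'.length + 1 = n := by simpa using hlen
      have hstart : (a, y) ∉ q'.support := ((Walk.cons_isPath_iff h q').mp hpath).2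
      have hsupp' : ∀ v ∈ q'.support, a <= v.1 := fun v hv =>
        hsupp v (by rw [Walk.support_cons]; exact List.mem_cons_of_mem _ hv)
      rcases adj_cases h with ⟨hw, hc⟩ | ⟨hw, hc⟩ | ⟨hw, hc⟩ | ⟨hw, hc⟩
      · simp only at hc
        rw [hey] at hc
        exact absurd hc (zmod_ne_add_one _)
      · rw [hw] at hwsupp
        simp only at hwsupp
        omega
      · -- vertical up
        simp only at hw hc
        have hy'cast : ((y + 1 : ℤ) : ZMod 2) = (y : ZMod 2) + 1 := by push_cast; ring
        have hnb : nb ε a (y + 1) = y := by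
          rw [nb, if_neg, add_sub_cancel_right]
          rw [hy'cast, ← hc]
          exact fun hh => zmod_ne_add_one _ hh.symm
        exact vert_step ε η ih a y j (y+1) h q' hlen' hpath hstart hsupp' hej hn hw hy'cast hnb
      · -- vertical down
        simp only at hw hc
        have hy'cast : ((y - 1 : ℤ) : ZMod 2) = (y : ZMod 2) + 1 := by
          push_cast
          linear_combination -htwo
        have hnb : nb ε a (y - 1) = y := by
          rw [nb, if_pos, sub_add_cancel]
          push_cast
          rw [hc]
          ring
        exact vert_step ε η ih a y j (y-1) h q' hlen' hpath hstart hsupp' hej hn hw hy'cast hnb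
  · -- StA
    intro a z j q hlen hpath hsupp hej hn hex
    cases q with
    | nil => simp only [Walk.length_nil] at hlen; omega
    | @cons _ w _ h q' =>
      have hwsupp : a ≤ w.1 := hsupp w (by simp)
      have hlen' : q'.length + 1 = n := by simpa using hlen
      have hstart : (a, z) ∉ q'.support := ((Walk.cons_isPath_iff h q').mp hpath).2
      have hsupp' : ∀ v ∈ q'.support, a ≤ v.1 := fun v hv =>
        hsupp v (by rw [Walk.support_cons]; exact List.mem_cons_of_mem _ hv)
      have hextl : (a, nb ε a z) ∉ q'.support := by
        simpa [Walk.support_cons] using hex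
      rcases adj_cases h with ⟨hw, hc⟩ | ⟨hw, hc⟩ | ⟨hw, hc⟩ | ⟨hw, hc⟩
      · -- horizontal right : recurse into E
        simp only at hw hc
        subst hw
        obtain ⟨-, -, -, hE⟩ := ih (n - 1) (by omega)
        obtain ⟨hodd, hzj⟩ := hE a z j q' (by omega) hpath.of_cons hsupp' hc.symm hej hstart
        refine ⟨?_, hzj⟩
        rw [Nat.even_iff]; rw [Nat.odd_iff] at hodd; omega
      · rw [hw] at hwsupp
        simp only at hwsupp
        omega
      · -- vertical up : contradicts exclusion
        exfalso
        simp only at hw hc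
        apply hextl
        rw [nb, if_pos hc, ← hw]
        exact Walk.start_mem_support q'
      · -- vertical down : contradicts exclusion
        exfalso
        simp only at hw hc
        apply hextl
        have : ¬ ((z : ZMod 2) = ε a) := by rw [hc]; exact (zmod_ne_add_one _).symm
        rw [nb, if_neg this, ← hw]
        exact Walk.start_mem_support q'
  · -- StB
    intro a z j q hlen hpath hsupp hej hez hex
    cases q with
    | nil =>
      exfalso
      rw [hez] at hej
      exact zmod_ne_add_one _ hej
    | @cons _ w _ h q' =>
      have hwsupp : a ≤ w.1 := hsupp w (by simp)
      have hlen' : q'.length + 1 = n := by simpa using hlen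
      have hstart : (a, z) ∉ q'.support := ((Walk.cons_isPath_iff h q').mp hpath).2
      have hsupp' : ∀ v ∈ q'.support, a ≤ v.1 := fun v hv =>
        hsupp v (by rw [Walk.support_cons]; exact List.mem_cons_of_mem _ hv)
      have hextl : ((a + 1 : ℤ), z) ∉ q'.support := by
        simpa [Walk.support_cons] using hex
      rcases adj_cases h with ⟨hw, hc⟩ | ⟨hw, hc⟩ | ⟨hw, hc⟩ | ⟨hw, hc⟩
      · -- horizontal right : excluded
        exfalso
        simp only at hw
        exact hextl (hw ▸ Walk.start_mem_support q')
      · rw [hw] at hwsupp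
        simp only at hwsupp
        omega
      · -- vertical up
        simp only at hw hc
        exact vert_stepB ε η ih a z j (z+1) h q' hlen' hpath hstart hsupp' hej
          hw (by push_cast; ring) (by
            rw [nb, if_neg, add_sub_cancel_right]
            rw [show ((z + 1 : ℤ) : ZMod 2) = (z : ZMod 2) + 1 by push_cast; ring, ← hc]
            exact fun hh => zmod_ne_add_one _ hh.symm)
      · -- vertical down
        simp only at hw hc
        exact vert_stepB ε η ih a z j (z-1) h q' hlen' hpath hstart hsupp' hej
          hw (by push_cast; linear_combination -htwo) (by
            rw [nb, if_pos, sub_add_cancel]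
            push_cast
            rw [hc]; ring)
  · -- StE
    intro a y j q hlen hpath hsupp hey hej hex
    obtain ⟨w, w', q₁, hadj, q₂, heq, hall, hw'⟩ :=
      walk_split (fun v => v.1 ≤ a) q
        (by intro hcon; simp only at hcon; omega) (by simp)
    subst heq
    have hw1 : ¬ (w.1 ≤ a) := by
      have := hall w (Walk.end_mem_support q₁)
      simpa using this
    have hw'2 : a ≤ w'.1 := by
      apply hsupp
      apply Walk.subset_support_append_right
      rw [Walk.support_cons]
      exact List.mem_cons_of_mem _ (Walk.start_mem_support q₂)
    obtain ⟨wx, wz⟩ := w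
    simp only at hw1
    rcases adj_cases hadj with ⟨hww, hc⟩ | ⟨hww, hc⟩ | ⟨hww, hc⟩ | ⟨hww, hc⟩
    · exfalso; rw [hww] at hw'; simp at hw'; omega
    · -- the crossing edge is horizontal, pointing left
      simp only at hww hc
      have hwx : wx = a + 1 := by
        rw [hww] at hw'
        simp at hw'
        omega
      subst hwx
      have hW' : w' = ((a : ℤ), wz) := by rw [hww]; norm_num
      subst hW'
      have hez : η wz = (a : ZMod 2) := by
        push_cast at hc
        linear_combination -hc
      have hsupp_eq : (q₁.append (Walk.cons hadj q₂)).support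
          = q₁.support ++ q₂.support := by
        rw [Walk.support_append, Walk.support_cons, List.tail_cons]
      have hnd : (q₁.support ++ q₂.support).Nodup := by
        rw [← hsupp_eq]; exact hpath.support_nodup
      have hpath₁ : q₁.IsPath := hpath.of_append_left
      have hpath₂ : q₂.IsPath := hpath.of_append_right.of_cons
      have hq1pos : q₁.length ≠ 0 := by
        intro h0
        have hje : (((a : ℤ) + 1, y) : ℤ × ℤ) = ((a : ℤ) + 1, wz) :=
          Walk.eq_of_length_eq_zero h0
        have hyw : y = wz := by simpa using congrArg Prod.snd hje
        apply hex
        rw [hsupp_eq]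
        refine List.mem_append_right _ ?_
        rw [hyw]
        exact Walk.start_mem_support q₂
      have hn' : n = q₁.length + 1 + q₂.length := by
        rw [← hlen, Walk.length_append, Walk.length_cons]
        omega
      obtain ⟨hP, -, -, -⟩ := ih q₁.length (by omega)
      obtain ⟨hodd1, hyz⟩ := hP (a+1) y wz q₁ rfl hpath₁
        (fun v hv => by have hvv := hall v hv; simp only [not_le] at hvv; omega)
        (by rw [hey]; push_cast; exact (zmod_add11 _).symm)
        (by rw [hez]; push_cast; exact (zmod_add11 _).symm)
        (by omega)
      obtain ⟨-, -, hB, -⟩ := ih q₂.length (by omega)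
      have hdisj := (List.nodup_append'.mp hnd).2.2
      obtain ⟨hodd2, hzj⟩ := hB a wz j q₂ rfl hpath₂
        (fun v hv => hsupp v (by rw [hsupp_eq]; exact List.mem_append_right _ hv))
        hej hez
        (fun hmem => hdisj (Walk.end_mem_support q₁) (List.mem_of_mem_tail hmem))
      constructor
      · rw [Nat.odd_iff] at hodd1 hodd2 ⊢
        omega
      · exact zmod_chain _ _ _ hyz hzj
    · exfalso; rw [hww] at hw'; simp at hw'; omega
    · exfalso; rw [hww] at hw'; simp at hw'; omega

lemma path_loop_nil {V : Type*} {G : SimpleGraph V} {v : V} (q : G.Walk v v)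
    (h : q.IsPath) : q.length = 0 := by
  cases q with
  | nil => rfl
  | cons h' r =>
    exact absurd (Walk.end_mem_support r) ((Walk.cons_isPath_iff h' r).mp h).2

end HitoAux

open HitoAux SimpleGraph

/-- An `a`-excursion from `(a-1, i)` to `(a-1, j)` has `i ≢ j (mod 2)` and odd length. -/
theorem hitomezashi_excursion_odd (ε η : ℤ → ZMod 2) (a i j : ℤ)
    (p : (Hitomezashi ε η).Walk (a - 1, i) (a - 1, j)) (h : IsExcursion ε η a p) :
    ¬ i ≡ j [ZMOD 2] ∧ Odd p.length := by
  obtain ⟨hpath, hlen3, -, -, hint⟩ := h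
  cases p with
  | nil => simp at hlen3
  | @cons _ w _ h1 p' =>
    have hp'nn := Walk.support_ne_nil p'
    have hw_int : a ≤ w.1 := by
      apply hint
      rw [Walk.support_cons, List.tail_cons]
      cases p' with
      | nil => simp [Walk.support_cons] at hlen3
      | @cons _ t _ h2 p'' =>
        rw [Walk.support_cons, List.dropLast_cons_of_ne_nil (Walk.support_ne_nil p'')]
        exact List.mem_cons_self
    have hstart_nmem : ((a : ℤ) - 1, i) ∉ p'.support :=
      ((Walk.cons_isPath_iff h1 p').mp hpath).2
    have hpath' : p'.IsPath := hpath.of_cons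
    rcases adj_cases h1 with ⟨hw, hc⟩ | ⟨hw, hc⟩ | ⟨hw, hc⟩ | ⟨hw, hc⟩
    · -- the first edge goes right
      simp only at hw hc
      have hwi : w = ((a : ℤ), i) := by rw [hw]; norm_num
      subst hwi
      push_cast at hc
      have hci : η i = (a : ZMod 2) + 1 := by linear_combination -hc - htwo
      -- split the rest at the first return to the line x = a - 1
      obtain ⟨u, u', q₁, hadj, q₂, heq, hall, hu'⟩ :=
        walk_split (fun v => v.1 ≤ a - 1) p'
          (by intro hcon; simp only at hcon; omega) (by simp)
      subst heq
      -- the return vertex is the final vertex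
      have hu'_eq : u' = ((a : ℤ) - 1, j) := by
        have hmem : u' ∈ (q₁.append (Walk.cons hadj q₂)).support := by
          apply Walk.subset_support_append_right
          rw [Walk.support_cons]
          exact List.mem_cons_of_mem _ (Walk.start_mem_support q₂)
        have hsplit := List.dropLast_append_getLast hp'nn
        rw [Walk.getLast_support] at hsplit
        rw [← hsplit, List.mem_append, List.mem_singleton] at hmem
        rcases hmem with hmem | hmem
        · exfalso
          have := hint u' (by rw [Walk.support_cons, List.tail_cons]; exact hmem)
          omega
        · exact hmem
      subst hu'_eq
      -- the last edge comes from (a, j)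
      have hu1 : ¬ (u.1 ≤ a - 1) := hall u (Walk.end_mem_support q₁)
      rcases adj_cases hadj with ⟨huu, hcu⟩ | ⟨huu, hcu⟩ | ⟨huu, hcu⟩ | ⟨huu, hcu⟩
      · exfalso
        have hfst := congrArg Prod.fst huu
        simp only at hfst
        omega
      · -- the last edge goes from (a, j) to (a-1, j)
        have hfst := congrArg Prod.fst huu
        have hsnd := congrArg Prod.snd huu
        simp only at hfst hsnd
        have huq : u = ((a : ℤ), j) := Prod.ext (by omega) hsnd.symm
        subst huq
        simp only at hcu
        have hcj : η j = (a : ZMod 2) + 1 := by linear_combination -hcu - htwo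
        have hq2path : q₂.IsPath := (hpath'.of_append_right).of_cons
        have hq2len : q₂.length = 0 := path_loop_nil q₂ hq2path
        have hq1pos : q₁.length ≠ 0 := by
          intro h0
          have hje : (((a : ℤ), i) : ℤ × ℤ) = ((a : ℤ), j) :=
            Walk.eq_of_length_eq_zero h0
          have hij : i = j := by simpa using congrArg Prod.snd hje
          subst hij
          exact hstart_nmem (Walk.end_mem_support _)
        obtain ⟨hP, -, -, -⟩ := main ε η q₁.length
        obtain ⟨hodd1, hij⟩ := hP a i j q₁ rfl hpath'.of_append_left
          (fun v hv => by have hvv := hall v hv; simp only [not_le] at hvv; omega)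
          hci hcj (by omega)
        constructor
        · intro hmod
          exact hij ((ZMod.intCast_eq_intCast_iff i j 2).mpr hmod)
        · have hplen : (Walk.cons h1 (q₁.append (Walk.cons hadj q₂))).length
              = q₁.length + 2 := by
            rw [Walk.length_cons, Walk.length_append, Walk.length_cons, hq2len]
          rw [hplen, Nat.odd_iff]
          rw [Nat.odd_iff] at hodd1
          omega
      · exfalso
        have hfst := congrArg Prod.fst huu
        simp only at hfst
        omega
      · exfalso
        have hfst := congrArg Prod.fst huu
        simp only at hfst
        omega
    · exfalso
      rw [hw] at hw_int
      simp only at hw_int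
      omega
    · exfalso
      rw [hw] at hw_int
      simp only at hw_int
      omega
    · exfalso
      rw [hw] at hw_int
      simp only at hw_int
      omega
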